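/- Let P be a finite set of points in a metric space and let S = {s_1,...,s_k} be k centers such that assigning each point to its nearest center gives a λ-approximation to the (unconstrained) k-median cost. Then for any partition of P into clusters C_1,...,C_k (in particular a balanced one), choosing for each cluster C_j the center s'_j ∈ S nearest to some designated point of C_j yields Σ_j Σ_{q∈C_j} dist(q, s'_j) ≤ Σ_j Σ_{q∈C_j} (dist(q, c_j) + dist(c_j, p_j) + dist(p_j, s'_j)) where c_j is any center for C_j and p_j ∈ C_j; consequently there exists a k-tuple from S^k inducing a (3λ+2)-approximation of the balanced k-median problem. -/
import Mathlib


/-- if the centers `S` achieve unconstrained k-median cost at most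
`λ` times the cost of the (balanced) optimal solution with clusters `C j` and centers
`copt j`, then some k-tuple of centers drawn from `S` serves the clusters `C j` with
total cost at most `(3λ+2)` times the optimal balanced cost. -/
theorem stmt11 {X : Type*} [MetricSpace X] {k : ℕ} (hk : 0 < k)
    (P : Finset X) (L U : ℕ) (hL : 0 < L) (hLU : L ≤ U)
    (S : Fin k → X) (lam : ℝ) (hlam : 1 ≤ lam)
    (C : Fin k → Finset X) (copt : Fin k → X)
    (hsub : ∀ j, C j ⊆ P)
    (hdisj : ∀ i j, i ≠ j → Disjoint (C i) (C j))
    (hcover : ∀ p ∈ P, ∃ j, p ∈ C j)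
    (hsize : ∀ j, L ≤ (C j).card ∧ (C j).card ≤ U)
    (hS : ∑ p ∈ P, (Finset.univ.inf' ⟨⟨0, hk⟩, Finset.mem_univ _⟩
        fun j : Fin k => dist p (S j)) ≤
      lam * ∑ j, ∑ p ∈ C j, dist p (copt j)) :
    ∃ s' : Fin k → X, (∀ j, ∃ i, s' j = S i) ∧
      ∑ j, ∑ q ∈ C j, dist q (s' j) ≤
        (3 * lam + 2) * ∑ j, ∑ p ∈ C j, dist p (copt j) := by
  classical
  set j0 : Fin k := ⟨0, hk⟩ with hj0
  set f : X → ℝ := fun p => Finset.univ.inf' ⟨j0, Finset.mem_univ _⟩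
      (fun j : Fin k => dist p (S j)) with hf
  have hf_nonneg : ∀ p, 0 ≤ f p := fun p =>
    Finset.le_inf' _ _ (fun i _ => dist_nonneg)
  have hf_ex : ∀ p : X, ∃ i, f p = dist p (S i) := by
    intro p
    obtain ⟨i, -, hi⟩ := Finset.exists_mem_eq_inf' (α := ℝ)
      ⟨j0, Finset.mem_univ _⟩ (fun j : Fin k => dist p (S j))
    exact ⟨i, hi⟩
  have hpj : ∀ j, ∃ p, (C j).Nonempty → p ∈ C j ∧
      ∀ q ∈ C j, dist p (copt j) + f p ≤ dist q (copt j) + f q := by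
    intro j
    by_cases hj : (C j).Nonempty
    · obtain ⟨p, hp, hmin⟩ := (C j).exists_min_image
        (fun p => dist p (copt j) + f p) hj
      exact ⟨p, fun _ => ⟨hp, hmin⟩⟩
    · exact ⟨S j0, fun h => absurd h hj⟩
  choose pj hpjmin using hpj
  have hexi : ∀ j, ∃ i, f (pj j) = dist (pj j) (S i) := fun j => hf_ex (pj j)
  choose ij hij using hexi
  refine ⟨fun j => if (C j).Nonempty then S (ij j) else S j0, ?_, ?_⟩
  · intro j; dsimp only; split <;> exact ⟨_, rfl⟩
  have key : ∀ j, ∑ q ∈ C j, dist q (if (C j).Nonempty then S (ij j) else S j0)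
      ≤ ∑ q ∈ C j, (2 * dist q (copt j) + f q) := by
    intro j
    by_cases hj : (C j).Nonempty
    · simp only [hj, if_true]
      apply Finset.sum_le_sum
      intro q hq
      have h1 : dist q (S (ij j)) ≤ dist q (pj j) + dist (pj j) (S (ij j)) :=
        dist_triangle _ _ _
      have h1' : dist q (pj j) ≤ dist q (copt j) + dist (copt j) (pj j) :=
        dist_triangle _ _ _
      have h2 : dist (pj j) (S (ij j)) = f (pj j) := (hij j).symm
      have h3 : dist (pj j) (copt j) + f (pj j) ≤ dist q (copt j) + f q :=
        (hpjmin j hj).2 q hq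
      have h4 : dist (copt j) (pj j) = dist (pj j) (copt j) := dist_comm _ _
      linarith
    · simp [Finset.not_nonempty_iff_eq_empty.mp hj]
  have hsum1 : ∑ j, ∑ q ∈ C j, dist q (if (C j).Nonempty then S (ij j) else S j0)
      ≤ ∑ j, ∑ q ∈ C j, (2 * dist q (copt j) + f q) :=
    Finset.sum_le_sum fun j _ => key j
  have hsplit : ∑ j, ∑ q ∈ C j, (2 * dist q (copt j) + f q)
      = 2 * (∑ j, ∑ q ∈ C j, dist q (copt j)) + ∑ j, ∑ q ∈ C j, f q := by
    rw [Finset.mul_sum]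
    rw [← Finset.sum_add_distrib]
    congr 1
    ext j
    rw [Finset.mul_sum, ← Finset.sum_add_distrib]
  have hfsum : ∑ j, ∑ q ∈ C j, f q ≤ ∑ p ∈ P, f p := by
    have hdisj' : ∀ i ∈ (Finset.univ : Finset (Fin k)), ∀ j ∈ Finset.univ,
        i ≠ j → Disjoint (C i) (C j) := fun i _ j _ h => hdisj i j h
    rw [← Finset.sum_biUnion hdisj']
    apply Finset.sum_le_sum_of_subset_of_nonneg
    · intro p hp
      obtain ⟨j, -, hj⟩ := Finset.mem_biUnion.mp hp
      exact hsub j hj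
    · intro p _ _; exact hf_nonneg p
  have hOPT : 0 ≤ ∑ j, ∑ p ∈ C j, dist p (copt j) :=
    Finset.sum_nonneg fun j _ => Finset.sum_nonneg fun p _ => dist_nonneg
  have hfP : ∑ p ∈ P, f p ≤ lam * ∑ j, ∑ p ∈ C j, dist p (copt j) := hS
  nlinarith [hsum1, hsplit, hfsum, hfP, hOPT, hlam]
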